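/- Let V, W be finite-dimensional inner product spaces, A ∈ Lin(V, W) of rank r > 0, and let p(λ) = (−1)^d Σ_{j=0}^d a_j λ^{d−j} be the characteristic polynomial of A A* ∈ Lin(W, W), where d = dim W and a_0 = 1. Then a_r ≠ 0 and the Moore–Penrose pseudoinverse satisfies Decell's formula: A† = −(1/a_r) A* ( Σ_{i=1}^r a_{i−1} (A A*)^{r−i} ). -/

import Mathlib

open Module LinearMap Metric Filter Topology Polynomial
open RealInnerProductSpace

/-- Orthogonal projection onto a submodule, as an endomorphism. -/
noncomputable def orthProj {E : Type*} [NormedAddCommGroup E] [InnerProductSpace ℝ E]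
    [FiniteDimensional ℝ E] (K : Submodule ℝ E) : E →L[ℝ] E :=
  K.subtypeL.comp (K.orthogonalProjectionOnto)

/-- `X` is the Moore–Penrose pseudoinverse of `A`: `A X = Proj_{im A}`,
`X A = Proj_{im A*}`, together with the normalization `X Proj_{im A} = X`
(i.e. `X` vanishes on `(im A)ᗮ`), which pins `X` down uniquely. -/
def IsMP {V W : Type*} [NormedAddCommGroup V] [InnerProductSpace ℝ V] [FiniteDimensional ℝ V]
    [NormedAddCommGroup W] [InnerProductSpace ℝ W] [FiniteDimensional ℝ W]
    (A : V →L[ℝ] W) (X : W →L[ℝ] V) : Prop :=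
  A ∘L X = orthProj (LinearMap.range (A : V →ₗ[ℝ] W)) ∧
  X ∘L A = orthProj (LinearMap.range (ContinuousLinearMap.adjoint A : W →ₗ[ℝ] V)) ∧
  X ∘L orthProj (LinearMap.range (A : V →ₗ[ℝ] W)) = X

set_option maxHeartbeats 2000000 in
/-- Decell's formula: if `rank A = r > 0` and `a_j` are the coefficients of the
characteristic polynomial of `A A*` (so that `p(λ) = (−1)^d ∑_j a_j λ^{d−j}`, `a_0 = 1`,
i.e. `a j` is the coefficient of `λ^{d−j}` in the monic characteristic polynomial),
then `a_r ≠ 0` and `A† = −(1/a_r) A* (∑_{i=1}^r a_{i−1} (A A*)^{r−i})`. -/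
theorem decell_formula
    {V W : Type*} [NormedAddCommGroup V] [InnerProductSpace ℝ V] [FiniteDimensional ℝ V]
    [NormedAddCommGroup W] [InnerProductSpace ℝ W] [FiniteDimensional ℝ W]
    (A : V →L[ℝ] W) (Adag : W →L[ℝ] V) (hA : IsMP A Adag)
    (r : ℕ) (hr : finrank ℝ (LinearMap.range (A : V →ₗ[ℝ] W)) = r) (hr0 : 0 < r)
    (d : ℕ) (hd : d = finrank ℝ W) (a : ℕ → ℝ)
    (ha : ∀ j, a j =
      (((A ∘L ContinuousLinearMap.adjoint A : W →L[ℝ] W) : W →ₗ[ℝ] W)).charpoly.coeff (d - j)) :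
    a r ≠ 0 ∧
    Adag = (-(a r)⁻¹) • ((ContinuousLinearMap.adjoint A) ∘L
      (∑ i ∈ Finset.range r, a i • (A ∘L ContinuousLinearMap.adjoint A) ^ (r - 1 - i))) := by
  classical
  set B : W →L[ℝ] W := A ∘L ContinuousLinearMap.adjoint A with hBdef
  set Bl : W →ₗ[ℝ] W := (B : W →ₗ[ℝ] W) with hBl
  have hBapp : ∀ x, Bl x = A (ContinuousLinearMap.adjoint A x) := fun x => rfl
  have hAA : ∀ x : W, ⟪ContinuousLinearMap.adjoint A x, ContinuousLinearMap.adjoint A x⟫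
      = ⟪Bl x, x⟫ := by
    intro x
    rw [hBapp]
    exact ContinuousLinearMap.adjoint_inner_right A (ContinuousLinearMap.adjoint A x) x
  -- symmetry
  have hsymm : ∀ x y : W, ⟪Bl x, y⟫ = ⟪x, Bl y⟫ := by
    intro x y
    rw [hBapp, hBapp, ← ContinuousLinearMap.adjoint_inner_left A,
      ContinuousLinearMap.adjoint_inner_right A]
  -- kernel of B equals kernel of adjoint
  have hkerB : ∀ x : W, Bl x = 0 ↔ ContinuousLinearMap.adjoint A x = 0 := by
    intro x
    constructor
    · intro h
      have h0 := hAA x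
      rw [h, inner_zero_left] at h0
      exact inner_self_eq_zero.mp h0
    · intro h
      rw [hBapp, h, map_zero]
  -- orthogonal complement of range A
  have hRA : (LinearMap.range (A : V →ₗ[ℝ] W))ᗮ = LinearMap.ker (ContinuousLinearMap.adjoint A : W →ₗ[ℝ] V) := by
    ext x
    simp only [Submodule.mem_orthogonal, LinearMap.mem_range, LinearMap.mem_ker,
      forall_exists_index]
    constructor
    · intro h
      have h0 := hAA x
      rw [hBapp, h (A (ContinuousLinearMap.adjoint A x))
        (ContinuousLinearMap.adjoint A x) rfl] at h0
      exact inner_self_eq_zero.mp h0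
    · intro h u v hv
      rw [← hv]
      show ⟪A v, x⟫ = 0
      rw [← ContinuousLinearMap.adjoint_inner_right A v x,
        show ContinuousLinearMap.adjoint A x = 0 from h, inner_zero_right]
  -- range B = range A
  have hrange : LinearMap.range (B : W →ₗ[ℝ] W) = LinearMap.range (A : V →ₗ[ℝ] W) := by
    have horth : (LinearMap.range (B : W →ₗ[ℝ] W))ᗮ = (LinearMap.range (A : V →ₗ[ℝ] W))ᗮ := by
      rw [hRA]
      ext x
      simp only [Submodule.mem_orthogonal, LinearMap.mem_range, LinearMap.mem_ker,
        forall_exists_index]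
      constructor
      · intro h
        have h1 : ⟪Bl x, x⟫ = 0 := h (B x) x rfl
        exact inner_self_eq_zero.mp ((hAA x).trans h1)
      · intro h u v hv
        have hx : Bl x = 0 := (hkerB x).mpr h
        rw [← hv, real_inner_comm]
        show ⟪x, Bl v⟫ = 0
        rw [← hsymm, hx, inner_zero_left]
    calc LinearMap.range (B : W →ₗ[ℝ] W) = (LinearMap.range (B : W →ₗ[ℝ] W))ᗮᗮ := (Submodule.orthogonal_orthogonal _).symm
      _ = (LinearMap.range (A : V →ₗ[ℝ] W))ᗮᗮ := by rw [horth]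
      _ = LinearMap.range (A : V →ₗ[ℝ] W) := Submodule.orthogonal_orthogonal _
  have hrangeBl : LinearMap.range Bl = LinearMap.range (A : V →ₗ[ℝ] W) := hrange
  have hrd : r ≤ d := by
    rw [← hr, hd]
    exact Submodule.finrank_le _
  -- kernel dimension
  have hkerdim : finrank ℝ (LinearMap.ker Bl) = d - r := by
    have h2 := LinearMap.finrank_range_add_finrank_ker Bl
    rw [hrangeBl, hr, ← hd] at h2
    omega
  -- kernels of powers
  have hkerpow : ∀ n, LinearMap.ker (Bl ^ n) ≤ LinearMap.ker Bl := by
    have hstep : ∀ k, LinearMap.ker (Bl ^ (k + 2)) ≤ LinearMap.ker (Bl ^ (k + 1)) := by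
      intro k x hx
      rw [LinearMap.mem_ker] at hx ⊢
      have h0 : ⟪(Bl ^ (k+1)) x, (Bl ^ (k+1)) x⟫ = 0 := by
        have e1 : (Bl ^ (k+1)) x = Bl ((Bl ^ k) x) := by
          rw [pow_succ', Module.End.mul_apply]
        nth_rewrite 1 [e1]
        rw [hsymm, ← Module.End.mul_apply, ← pow_succ', show (k:ℕ)+1+1 = k+2 from rfl, hx, inner_zero_right]
      exact inner_self_eq_zero.mp h0
    intro n
    induction n with
    | zero =>
      intro x hx
      rw [LinearMap.mem_ker] at hx ⊢
      rw [pow_zero] at hx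
      have hx0 : x = 0 := hx
      rw [hx0, map_zero]
    | succ n ih =>
      match n, ih with
      | 0, _ => rw [pow_one]
      | (k+1), ih => exact le_trans (hstep k) ih
  -- trailing degree
  have hmge : Module.End.maxGenEigenspace (Bl : Module.End ℝ W) 0 = LinearMap.ker Bl := by
    apply le_antisymm
    · intro x hx
      rw [Module.End.mem_maxGenEigenspace] at hx
      obtain ⟨k, hk⟩ := hx
      simp only [zero_smul, sub_zero] at hk
      exact hkerpow k hk
    · intro x hx
      rw [Module.End.mem_maxGenEigenspace]
      exact ⟨1, by simpa using hx⟩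
  have htd : Bl.charpoly.natTrailingDegree = d - r := by
    rw [← LinearMap.finrank_maxGenEigenspace_zero_eq, hmge, hkerdim]
  have har : a r ≠ 0 := by
    rw [ha r]
    have h1 : Bl.charpoly ≠ 0 := Bl.charpoly_monic.ne_zero
    have h2 := mt Polynomial.trailingCoeff_eq_zero.mp h1
    rwa [Polynomial.trailingCoeff, htd] at h2
  refine ⟨har, ?_⟩
  -- the polynomial Q
  set Q : Polynomial ℝ := ∑ k ∈ Finset.range (r+1), Polynomial.C (a (r - k)) * Polynomial.X ^ k
    with hQdef
  have hQcoeff : ∀ n, Q.coeff n = if n ≤ r then a (r - n) else 0 := by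
    intro n
    rw [hQdef, Polynomial.finset_sum_coeff]
    simp only [Polynomial.coeff_C_mul, Polynomial.coeff_X_pow, mul_ite, mul_one, mul_zero]
    rw [Finset.sum_ite_eq (Finset.range (r+1)) n (fun k => a (r - k))]
    simp [Nat.lt_succ_iff]
  have hpQ : Bl.charpoly = Q * Polynomial.X ^ (d - r) := by
    apply Polynomial.ext
    intro i
    rw [Polynomial.coeff_mul_X_pow']
    by_cases him : d - r ≤ i
    · rw [if_pos him, hQcoeff]
      by_cases hid : i ≤ d
      · rw [if_pos (by omega)]
        rw [ha (r - (i - (d - r)))]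
        congr 1
        omega
      · rw [if_neg (by omega)]
        apply Polynomial.coeff_eq_zero_of_natDegree_lt
        rw [Bl.charpoly_natDegree, ← hd]
        omega
    · rw [if_neg him]
      apply Polynomial.coeff_eq_zero_of_lt_natTrailingDegree
      rw [htd]
      omega
  -- Cayley-Hamilton
  have hCH := Bl.aeval_self_charpoly
  set S : W →ₗ[ℝ] W := Polynomial.aeval Bl Q with hSdef
  have hSm : S * Bl ^ (d - r) = 0 := by
    have h1 : Polynomial.aeval Bl (Q * Polynomial.X ^ (d - r)) = 0 := by
      rw [← hpQ]; exact hCH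
    rwa [map_mul, map_pow, Polynomial.aeval_X] at h1
  have hBS : Bl ^ (d - r) * S = 0 := by
    have hc : Bl ^ (d - r) * S = S * Bl ^ (d - r) := by
      calc Bl ^ (d-r) * S = Polynomial.aeval Bl (Polynomial.X ^ (d-r) * Q) := by
            rw [map_mul, map_pow, Polynomial.aeval_X]
        _ = Polynomial.aeval Bl (Q * Polynomial.X ^ (d-r)) := by rw [mul_comm]
        _ = S * Bl ^ (d-r) := by rw [map_mul, map_pow, Polynomial.aeval_X]
    rw [hc, hSm]
  have hSB : S * Bl = 0 := by
    have hBS1 : Bl * S = 0 := by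
      apply LinearMap.ext
      intro x
      have hxk : (Bl ^ (d - r)) (S x) = 0 := by
        rw [← Module.End.mul_apply, hBS, LinearMap.zero_apply]
      have hmem := hkerpow (d - r) (LinearMap.mem_ker.mpr hxk)
      rw [LinearMap.mem_ker] at hmem
      rw [Module.End.mul_apply, hmem, LinearMap.zero_apply]
    calc S * Bl = Polynomial.aeval Bl (Q * Polynomial.X) := by rw [map_mul, Polynomial.aeval_X]
      _ = Polynomial.aeval Bl (Polynomial.X * Q) := by rw [mul_comm]
      _ = Bl * S := by rw [map_mul, Polynomial.aeval_X]
      _ = 0 := hBS1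
  have hS : S = ∑ k ∈ Finset.range (r+1), a (r - k) • Bl ^ k := by
    rw [hSdef, hQdef, map_sum]
    refine Finset.sum_congr rfl fun k _ => ?_
    rw [map_mul, map_pow, Polynomial.aeval_X, Polynomial.aeval_C,
      Algebra.algebraMap_eq_smul_one, smul_mul_assoc, one_mul]
  -- the operator T
  set T : W →L[ℝ] W := ∑ i ∈ Finset.range r, a i • B ^ (r - 1 - i) with hTdef
  have hpowBBl : ∀ (k : ℕ) (w : W), (B ^ k) w = (Bl ^ k) w := by
    intro k
    induction k with
    | zero => intro w; simp
    | succ k ih =>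
      intro w
      rw [pow_succ, pow_succ, ContinuousLinearMap.mul_apply, Module.End.mul_apply, ih]
      exact congrArg _ rfl
  have hBT : ∀ w, B (T w) = S w - a r • w := by
    intro w
    have hTw : T w = ∑ i ∈ Finset.range r, a i • (B ^ (r - 1 - i)) w := by
      rw [hTdef, ContinuousLinearMap.sum_apply]
      refine Finset.sum_congr rfl fun i _ => ?_
      rw [ContinuousLinearMap.smul_apply]
    rw [hTw, map_sum]
    have hterm : ∀ i ∈ Finset.range r, B (a i • (B ^ (r - 1 - i)) w)
        = a i • (Bl ^ (r - i)) w := by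
      intro i hi
      rw [Finset.mem_range] at hi
      rw [map_smul]
      congr 1
      have h1 : B ((B ^ (r - 1 - i)) w) = (B ^ ((r - 1 - i) + 1)) w := by
        rw [pow_succ', ContinuousLinearMap.mul_apply]
      rw [h1, hpowBBl]
      congr 2
      omega
    rw [Finset.sum_congr rfl hterm]
    rw [← Finset.sum_range_reflect (fun i => a i • (Bl ^ (r - i)) w) r]
    have hterm2 : ∀ j ∈ Finset.range r,
        a (r - 1 - j) • (Bl ^ (r - (r - 1 - j))) w = a (r - (j + 1)) • (Bl ^ (j + 1)) w := by
      intro j hj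
      rw [Finset.mem_range] at hj
      have e1 : r - 1 - j = r - (j + 1) := by omega
      have e2 : r - (r - 1 - j) = j + 1 := by omega
      rw [e2, e1]
    rw [Finset.sum_congr rfl hterm2, hS, LinearMap.sum_apply, Finset.sum_range_succ']
    simp only [LinearMap.smul_apply, Module.End.pow_apply]
    simp [add_sub_cancel_right]
  -- S on range A and on its orthogonal complement
  have hSrange : ∀ u, u ∈ LinearMap.range (A : V →ₗ[ℝ] W) → S u = 0 := by
    intro u hu
    rw [← hrange] at hu
    obtain ⟨y, hy⟩ := hu
    have h1 : S (Bl y) = 0 := by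
      rw [← Module.End.mul_apply, hSB, LinearMap.zero_apply]
    rwa [show Bl y = u from hy] at h1
  have hSperp : ∀ v ∈ (LinearMap.range (A : V →ₗ[ℝ] W))ᗮ, S v = a r • v := by
    intro v hv
    have hAv : ContinuousLinearMap.adjoint A v = 0 := by rw [hRA] at hv; exact hv
    have hBv : Bl v = 0 := (hkerB v).mpr hAv
    rw [hS, LinearMap.sum_apply, Finset.sum_range_succ']
    simp only [LinearMap.smul_apply]
    have hz : ∀ k ∈ Finset.range r, a (r - (k + 1)) • (Bl ^ (k + 1)) v = 0 := by
      intro k _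
      have h1 : (Bl ^ (k + 1)) v = 0 := by
        rw [pow_succ, Module.End.mul_apply, hBv, map_zero]
      rw [h1, smul_zero]
    rw [Finset.sum_eq_zero hz, zero_add]
    simp
  -- A composed with the candidate equals the projection
  set Xc : W →L[ℝ] V := (-(a r)⁻¹) • (ContinuousLinearMap.adjoint A ∘L T) with hXc
  have hAX : A ∘L Xc = orthProj (LinearMap.range (A : V →ₗ[ℝ] W)) := by
    apply ContinuousLinearMap.ext
    intro w
    have hu : ((LinearMap.range (A : V →ₗ[ℝ] W)).orthogonalProjectionOnto w : W) ∈ LinearMap.range (A : V →ₗ[ℝ] W) :=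
      SetLike.coe_mem _
    have hv : w - ((LinearMap.range (A : V →ₗ[ℝ] W)).orthogonalProjectionOnto w : W)
        ∈ (LinearMap.range (A : V →ₗ[ℝ] W))ᗮ := Submodule.sub_starProjection_mem_orthogonal w
    have hL : (A ∘L Xc) w = (-(a r)⁻¹) • (S w - a r • w) := by
      rw [ContinuousLinearMap.comp_apply, hXc, ContinuousLinearMap.smul_apply,
        ContinuousLinearMap.comp_apply, map_smul]
      congr 1
      rw [← hBT w]
      rfl
    set u : W := ((LinearMap.range (A : V →ₗ[ℝ] W)).orthogonalProjectionOnto w : W) with hudef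
    have hSw : S w = a r • (w - u) := by
      have hw : w = u + (w - u) := by abel
      calc S w = S (u + (w - u)) := by rw [← hw]
        _ = S u + S (w - u) := map_add _ _ _
        _ = 0 + a r • (w - u) := by rw [hSrange u hu, hSperp _ hv]
        _ = a r • (w - u) := by rw [zero_add]
    have hR : orthProj (LinearMap.range (A : V →ₗ[ℝ] W)) w = u := by
      simp only [orthProj, ContinuousLinearMap.comp_apply, Submodule.subtypeL_apply, hudef]
    rw [hL, hR, hSw]
    have hc : -(a r)⁻¹ * a r = -1 := by
      field_simp
    rw [← smul_sub, smul_smul, hc]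
    have he : (w - u) - w = -u := by abel
    rw [he]
    simp
  -- conclude
  obtain ⟨h1, h2, h3⟩ := hA
  have h4 : Adag = Adag ∘L (A ∘L Xc) := by rw [hAX]; exact h3.symm
  have h5 : Adag = orthProj (LinearMap.range (ContinuousLinearMap.adjoint A : W →ₗ[ℝ] V)) ∘L Xc := by
    rw [h4, ← ContinuousLinearMap.comp_assoc, h2]
  rw [h5, hXc]
  apply ContinuousLinearMap.ext
  intro w
  have hx : ((-(a r)⁻¹) • (ContinuousLinearMap.adjoint A ∘L T)) w
      ∈ LinearMap.range (ContinuousLinearMap.adjoint A : W →ₗ[ℝ] V) := by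
    refine ⟨(-(a r)⁻¹) • T w, ?_⟩
    rw [map_smul]
    rfl
  rw [ContinuousLinearMap.comp_apply]
  show orthProj _ _ = _
  simp only [orthProj, ContinuousLinearMap.comp_apply, Submodule.subtypeL_apply]
  exact Submodule.starProjection_eq_self_iff.mpr hx
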